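/- With f_ν(x) = ∫_{π[o,x]} n(H) dν(H), for all x, y ∈ Ω: ⟨f_ν(x) − f_ν(y), x − y⟩ = |x − y| ∫_{π[x,y]} sin α(x−y, H) dν(H), where α(v,H) ∈ [0, π/2] is the angle between the line spanned by v and the hyperplane H. -/

import Mathlib

open MeasureTheory Set

noncomputable section

/-- Euclidean space `ℝⁿ`. -/
abbrev Euc (n : ℕ) := EuclideanSpace ℝ (Fin n)

/-- The space of affine hyperplanes in `ℝⁿ`, encoded as pairs `(v, c)` with `‖v‖ = 1`,
representing the hyperplane `{x : ⟪x, v⟫ = c}`. -/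
abbrev Hyp (n : ℕ) := {p : Euc n × ℝ // ‖p.1‖ = 1}

/-- The hyperplane determined by `H`, as a subset of `ℝⁿ`. -/
def hset {n : ℕ} (H : Hyp n) : Set (Euc n) := {x | (inner ℝ x H.1.1 : ℝ) = H.1.2}

/-- `meets A = π A`: the set of hyperplanes intersecting `A`. -/
def meets {n : ℕ} (A : Set (Euc n)) : Set (Hyp n) := {H | (hset H ∩ A).Nonempty}

/-- The unit normal of `H` pointing out of the halfspace containing the basepoint `o`. -/
def nrm {n : ℕ} (o : Euc n) (H : Hyp n) : Euc n :=
  if (inner ℝ o H.1.1 : ℝ) < H.1.2 then H.1.1 else -H.1.1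

/-- `fnu ν o x = ∫_{π[o,x]} n(H) dν(H)`. -/
def fnu {n : ℕ} (ν : Measure (Hyp n)) (o : Euc n) (x : Euc n) : Euc n :=
  ∫ H in meets (segment ℝ o x), nrm o H ∂ν

/-- `sin α(v, H) = |⟪v, n(H)⟫| / |v|`, the sine of the angle between the line of `v`
and the hyperplane `H`. -/
def sinA {n : ℕ} (v : Euc n) (H : Hyp n) : ℝ := |(inner ℝ v H.1.1 : ℝ)| / ‖v‖

instance (n : ℕ) : BorelSpace (Hyp n) := Subtype.borelSpace _

variable {n : ℕ}

lemma mem_meets_singleton (p : Euc n) (H : Hyp n) :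
    H ∈ meets {p} ↔ (inner ℝ p H.1.1 : ℝ) = H.1.2 := by
  constructor
  · rintro ⟨q, hq, rfl⟩; exact hq
  · intro h; exact ⟨p, h, rfl⟩

set_option maxHeartbeats 1600000 in
lemma key_signs (a b c : ℝ) (ha : a ≠ 0) (hb : b ≠ 0) (hc : c ≠ 0) :
    (if a * b ≤ 0 then (if a < 0 then b - c else c - b) else 0)
      - (if a * c ≤ 0 then (if a < 0 then b - c else c - b) else 0)
    = (if b * c ≤ 0 then |b - c| else 0) := by
  rcases ha.lt_or_gt with ha | ha <;> rcases hb.lt_or_gt with hb | hb <;>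
    rcases hc.lt_or_gt with hc | hc <;>
    rcases abs_cases (b - c) with ⟨h1, h2⟩ | ⟨h1, h2⟩ <;> rw [h1] <;> split_ifs <;> nlinarith

lemma mem_meets_segment (x y : Euc n) (H : Hyp n) :
    H ∈ meets (segment ℝ x y) ↔
      ((inner ℝ x H.1.1 : ℝ) - H.1.2) * ((inner ℝ y H.1.1 : ℝ) - H.1.2) ≤ 0 := by
  set b : ℝ := (inner ℝ x H.1.1 : ℝ) - H.1.2 with hbdef
  set c : ℝ := (inner ℝ y H.1.1 : ℝ) - H.1.2 with hcdef
  constructor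
  · rintro ⟨p, hp, hpseg⟩
    rw [segment_eq_image'] at hpseg
    obtain ⟨t, ⟨ht0, ht1⟩, rfl⟩ := hpseg
    have hval : (inner ℝ (x + t • (y - x)) H.1.1 : ℝ) = H.1.2 := hp
    rw [inner_add_left, real_inner_smul_left, inner_sub_left] at hval
    have hlin : b + t * (c - b) = 0 := by
      simp only [hbdef, hcdef]; linear_combination hval
    rcases eq_or_lt_of_le ht0 with h0 | h0
    · have hb0 : b = 0 := by rw [← h0] at hlin; linarith
      rw [hb0]; simp
    · have h2 : t * (b * c) = (t - 1) * b ^ 2 := by linear_combination b * hlin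
      nlinarith [h2, h0, ht1, sq_nonneg b,
        mul_nonneg (by linarith : (0:ℝ) ≤ 1 - t) (sq_nonneg b)]
  · intro hbc
    rcases eq_or_ne b c with hbceq | hbcne
    · have hb0 : b = 0 := by nlinarith
      refine ⟨x, ?_, left_mem_segment ℝ x y⟩
      show (inner ℝ x H.1.1 : ℝ) = H.1.2
      simp only [hbdef] at hb0; linarith
    · have hbc' : b - c ≠ 0 := sub_ne_zero.mpr hbcne
      set t : ℝ := b / (b - c) with htdef
      have hmul : t * (b - c) = b := div_mul_cancel₀ b hbc'
      have hsgn : (0 ≤ b ∧ c ≤ 0) ∨ (b ≤ 0 ∧ 0 ≤ c) := mul_nonpos_iff.mp hbc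
      have hd : 0 < b - c ∨ b - c < 0 := by
        rcases hsgn with ⟨h1, h2⟩ | ⟨h1, h2⟩
        · left; exact lt_of_le_of_ne (by linarith) (Ne.symm hbc')
        · right; exact lt_of_le_of_ne (by linarith) hbc'
      have ht0 : 0 ≤ t := by
        rcases hsgn with ⟨h1, h2⟩ | ⟨h1, h2⟩ <;> rcases hd with hd | hd <;> nlinarith [hmul]
      have ht1 : t ≤ 1 := by
        rcases hsgn with ⟨h1, h2⟩ | ⟨h1, h2⟩ <;> rcases hd with hd | hd <;> nlinarith [hmul]
      refine ⟨x + t • (y - x), ?_, by rw [segment_eq_image']; exact ⟨t, ⟨ht0, ht1⟩, rfl⟩⟩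
      show (inner ℝ (x + t • (y - x)) H.1.1 : ℝ) = H.1.2
      rw [inner_add_left, real_inner_smul_left, inner_sub_left]
      simp only [hbdef, hcdef] at hmul
      linear_combination -hmul

lemma cont_lin (x : Euc n) : Continuous (fun H : Hyp n => (inner ℝ x H.1.1 : ℝ) - H.1.2) := by
  have h1 : Continuous (fun H : Hyp n => (H.1 : Euc n × ℝ)) := continuous_subtype_val
  exact ((continuous_const.inner (continuous_fst.comp h1))).sub (continuous_snd.comp h1)

lemma meas_meets_segment (x y : Euc n) : MeasurableSet (meets (segment ℝ x y)) := by
  have : meets (segment ℝ x y) =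
      {H : Hyp n | ((inner ℝ x H.1.1 : ℝ) - H.1.2) * ((inner ℝ y H.1.1 : ℝ) - H.1.2) ≤ 0} := by
    ext H; exact mem_meets_segment x y H
  rw [this]
  exact measurableSet_le (((cont_lin x).mul (cont_lin y)).measurable) measurable_const

lemma meas_nrm (o : Euc n) : Measurable (nrm o) := by
  unfold nrm
  refine Measurable.ite ?_ ?_ ?_
  · have : {H : Hyp n | (inner ℝ o H.1.1 : ℝ) < H.1.2} =
        {H : Hyp n | (inner ℝ o H.1.1 : ℝ) - H.1.2 < 0} := by
      ext H; simp [sub_neg]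
    rw [this]; exact measurableSet_lt (cont_lin o).measurable measurable_const
  · exact (continuous_fst.comp continuous_subtype_val).measurable
  · exact (continuous_fst.comp continuous_subtype_val).neg.measurable

lemma norm_nrm (o : Euc n) (H : Hyp n) : ‖nrm o H‖ = 1 := by
  unfold nrm; split_ifs <;> simp [H.2]

lemma isCompact_seg {n : ℕ} (x y : Euc n) : IsCompact (segment ℝ x y) := by
  rw [segment_eq_image']
  exact isCompact_Icc.image (by fun_prop)

/-- `⟨f_ν(x) − f_ν(y), x − y⟩ = |x − y| ∫_{π[x,y]} sin α(x−y, H) dν(H)`. -/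
theorem stmt4 (n : ℕ) (hn : 2 ≤ n) (Ω : Set (Euc n)) (hΩo : IsOpen Ω) (hΩne : Ω.Nonempty)
    (hΩc : Convex ℝ Ω) (ν : Measure (Hyp n))
    (hpt : ∀ p ∈ Ω, ν (meets {p}) = 0)
    (hseg : ∀ x ∈ Ω, ∀ y ∈ Ω, x ≠ y → 0 < ν (meets (segment ℝ x y)))
    (hcpt : ∀ K ⊆ Ω, IsCompact K → ν (meets K) < ⊤)
    (o : Euc n) (ho : o ∈ Ω) :
    ∀ x ∈ Ω, ∀ y ∈ Ω,
      (inner ℝ (fnu ν o x - fnu ν o y) (x - y) : ℝ) =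
        ‖x - y‖ * ∫ H in meets (segment ℝ x y), sinA (x - y) H ∂ν := by
  classical
  intro x hx y hy
  by_cases hxy : x = y
  · subst hxy; simp
  have hvne : ‖x - y‖ ≠ 0 := norm_ne_zero_iff.mpr (sub_ne_zero.mpr hxy)
  set A := meets (segment ℝ o x) with hAdef
  set B := meets (segment ℝ o y) with hBdef
  set C := meets (segment ℝ x y) with hCdef
  have hA : MeasurableSet A := meas_meets_segment o x
  have hB : MeasurableSet B := meas_meets_segment o y
  have hC : MeasurableSet C := meas_meets_segment x y
  have hνA : ν A ≠ ⊤ := (hcpt _ (hΩc.segment_subset ho hx) (isCompact_seg o x)).ne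
  have hνB : ν B ≠ ⊤ := (hcpt _ (hΩc.segment_subset ho hy) (isCompact_seg o y)).ne
  have hνC : ν C ≠ ⊤ := (hcpt _ (hΩc.segment_subset hx hy) (isCompact_seg x y)).ne
  set φ : Hyp n → ℝ := fun H => (inner ℝ (x - y) (nrm o H) : ℝ) with hφdef
  set ψ : Hyp n → ℝ := fun H => |(inner ℝ (x - y) H.1.1 : ℝ)| with hψdef
  have hφm : Measurable φ := Measurable.inner measurable_const (meas_nrm o)
  have hψm : Measurable ψ :=
    (Measurable.inner measurable_const
      ((continuous_fst.comp continuous_subtype_val).measurable)).abs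
  have hφbd : ∀ H, ‖φ H‖ ≤ ‖x - y‖ := by
    intro H
    calc ‖φ H‖ = |(inner ℝ (x - y) (nrm o H) : ℝ)| := rfl
    _ ≤ ‖x - y‖ * ‖nrm o H‖ := abs_real_inner_le_norm _ _
    _ = ‖x - y‖ := by rw [norm_nrm, mul_one]
  have hψbd : ∀ H, ‖ψ H‖ ≤ ‖x - y‖ := by
    intro H
    calc ‖ψ H‖ = |(inner ℝ (x - y) H.1.1 : ℝ)| := abs_abs _
    _ ≤ ‖x - y‖ * ‖H.1.1‖ := abs_real_inner_le_norm _ _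
    _ = ‖x - y‖ := by rw [H.2, mul_one]
  have hφA : IntegrableOn φ A ν :=
    Measure.integrableOn_of_bounded hνA hφm.aestronglyMeasurable (ae_of_all _ hφbd)
  have hφB : IntegrableOn φ B ν :=
    Measure.integrableOn_of_bounded hνB hφm.aestronglyMeasurable (ae_of_all _ hφbd)
  have hψC : IntegrableOn ψ C ν :=
    Measure.integrableOn_of_bounded hνC hψm.aestronglyMeasurable (ae_of_all _ hψbd)
  have hnA : IntegrableOn (nrm o) A ν :=
    Measure.integrableOn_of_bounded hνA (meas_nrm o).aestronglyMeasurable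
      (ae_of_all _ fun H => (norm_nrm o H).le)
  have hnB : IntegrableOn (nrm o) B ν :=
    Measure.integrableOn_of_bounded hνB (meas_nrm o).aestronglyMeasurable
      (ae_of_all _ fun H => (norm_nrm o H).le)
  -- the left-hand side as a difference of set integrals
  have e1 : (inner ℝ (fnu ν o x - fnu ν o y) (x - y) : ℝ)
      = (∫ H in A, φ H ∂ν) - ∫ H in B, φ H ∂ν := by
    rw [real_inner_comm, inner_sub_right]
    rw [hφdef]
    rw [show fnu ν o x = ∫ H in A, nrm o H ∂ν from rfl,
        show fnu ν o y = ∫ H in B, nrm o H ∂ν from rfl]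
    rw [← integral_inner hnA, ← integral_inner hnB]
  -- the a.e. identity
  have hN : ν (meets {o} ∪ (meets {x} ∪ meets {y})) = 0 :=
    measure_union_null (hpt o ho) (measure_union_null (hpt x hx) (hpt y hy))
  have hae : (fun H => A.indicator φ H - B.indicator φ H) =ᵐ[ν] C.indicator ψ := by
    filter_upwards [measure_eq_zero_iff_ae_notMem.mp hN] with H hH
    have hao : (inner ℝ o H.1.1 : ℝ) - H.1.2 ≠ 0 := by
      intro h; exact hH (Or.inl ((mem_meets_singleton o H).mpr (by linarith)))
    have hax : (inner ℝ x H.1.1 : ℝ) - H.1.2 ≠ 0 := by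
      intro h; exact hH (Or.inr (Or.inl ((mem_meets_singleton x H).mpr (by linarith))))
    have hay : (inner ℝ y H.1.1 : ℝ) - H.1.2 ≠ 0 := by
      intro h; exact hH (Or.inr (Or.inr ((mem_meets_singleton y H).mpr (by linarith))))
    have hφH : φ H = if (inner ℝ o H.1.1 : ℝ) - H.1.2 < 0
        then ((inner ℝ x H.1.1 : ℝ) - H.1.2) - ((inner ℝ y H.1.1 : ℝ) - H.1.2)
        else ((inner ℝ y H.1.1 : ℝ) - H.1.2) - ((inner ℝ x H.1.1 : ℝ) - H.1.2) := by
      rw [hφdef]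
      simp only [nrm, sub_neg]
      split_ifs with h
      · rw [inner_sub_left]; ring
      · rw [inner_neg_right, inner_sub_left]; ring
    have hψH : ψ H = |((inner ℝ x H.1.1 : ℝ) - H.1.2) - ((inner ℝ y H.1.1 : ℝ) - H.1.2)| := by
      simp only [hψdef, inner_sub_left]
      congr 1; ring
    show A.indicator φ H - B.indicator φ H = C.indicator ψ H
    rw [indicator_apply, indicator_apply, indicator_apply, hφH, hψH]
    simp only [hAdef, hBdef, hCdef, mem_meets_segment]
    exact key_signs _ _ _ hao hax hay
  have e2 : (∫ H in A, φ H ∂ν) - ∫ H in B, φ H ∂ν = ∫ H in C, ψ H ∂ν := by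
    rw [← integral_indicator hA, ← integral_indicator hB, ← integral_indicator hC,
      ← integral_sub ((integrable_indicator_iff hA).mpr hφA)
        ((integrable_indicator_iff hB).mpr hφB)]
    exact integral_congr_ae hae
  rw [e1, e2]
  -- pull out the norm
  have : ∀ H, sinA (x - y) H = ψ H / ‖x - y‖ := fun H => rfl
  simp only [this]
  rw [integral_div, mul_div_cancel₀ _ hvne]
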